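/- Let z : ℤ → ℝ → ℝ be a family of differentiable functions satisfying for all n ∈ ℤ and t ∈ ℝ the equation ż_n = z_n (z_{n+1} z_n − 1)(z_n z_{n−1} − 1)(z_{n+2} z_{n+1} − z_{n−1} z_{n−2}). Define u_n(t) = (z_{n+3}(t) z_{n+2}(t) − 1)(z_{n+2}(t) z_{n+1}(t) − 1) z_{n+1}(t) z_n(t). Then for all n ∈ ℤ and t ∈ ℝ, u̇_n = u_n (u_{n+2} + u_{n+1} − u_{n−1} − u_{n−2}), i.e., u solves the INB equation. -/

import Mathlib

/-- Equation `żₙ = zₙ(z_{n+1}zₙ−1)(zₙz_{n−1}−1)(z_{n+2}z_{n+1} − z_{n−1}z_{n−2})` is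
transformed into the INB equation by
`uₙ = (z_{n+3}z_{n+2}−1)(z_{n+2}z_{n+1}−1) z_{n+1} zₙ`. -/
theorem stmt_14 (z : ℤ → ℝ → ℝ)
    (hz : ∀ (n : ℤ) (t : ℝ), HasDerivAt (z n)
      (z n t * (z (n + 1) t * z n t - 1) * (z n t * z (n - 1) t - 1)
        * (z (n + 2) t * z (n + 1) t - z (n - 1) t * z (n - 2) t)) t)
    (u : ℤ → ℝ → ℝ)
    (hu : ∀ (n : ℤ) (t : ℝ),
      u n t = (z (n + 3) t * z (n + 2) t - 1) * (z (n + 2) t * z (n + 1) t - 1)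
        * z (n + 1) t * z n t) :
    ∀ (n : ℤ) (t : ℝ), HasDerivAt (u n)
      (u n t * (u (n + 2) t + u (n + 1) t - u (n - 1) t - u (n - 2) t)) t := by
  intro n t
  have h0 := hz n t
  have h1 := hz (n + 1) t
  have h2 := hz (n + 2) t
  have h3 := hz (n + 3) t
  have hfun : u n = fun s => (z (n + 3) s * z (n + 2) s - 1) * (z (n + 2) s * z (n + 1) s - 1)
      * z (n + 1) s * z n s := funext (hu n)
  rw [hfun]
  have key := ((((h3.mul h2).sub_const 1).mul ((h2.mul h1).sub_const 1)).mul h1).mul h0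
  refine key.congr_deriv ?_
  simp only [hu, Pi.mul_apply]
  ring_nf
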